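/- Let W: ℝ^s → ℝ be strictly convex and C² with ∇²W(Â) ≻ 0, Σ̂ = ∇W(Â), and for λ > 0 let z^λ minimize W*(Σ̂ − λz) over {z : ‖z‖_∞ ≤ 1}. Then as λ → 0, z^λ converges to the minimizer of ⟨z, (∇²W(Â))^{-1} z⟩ over z ∈ ∂‖Â‖₁. -/

import Mathlib

open Matrix Filter

/-- Legendre–Fenchel conjugate, with values in `EReal`. -/
noncomputable def fenchelConj {s : ℕ} (W : (Fin s → ℝ) → ℝ) (y : Fin s → ℝ) : EReal :=
  ⨆ A : Fin s → ℝ, ((y ⬝ᵥ A - W A : ℝ) : EReal)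

/-- The subdifferential of the ℓ¹ norm at `A`. -/
def l1Subdiff {s : ℕ} (A : Fin s → ℝ) : Set (Fin s → ℝ) :=
  {z | (∀ i, |z i| ≤ 1) ∧ ∀ i, A i ≠ 0 → z i = Real.sign (A i)}

/-- Hessian matrix of a function on `ℝ^s`. -/
noncomputable def hessianMatrix {s : ℕ} (W : (Fin s → ℝ) → ℝ) (A : Fin s → ℝ) :
    Matrix (Fin s) (Fin s) ℝ :=
  fun i j => fderiv ℝ (fun x => fderiv ℝ W x (Pi.single j 1)) A (Pi.single i 1)

variable {s : ℕ}

noncomputable def gradW (W : (Fin s → ℝ) → ℝ) (A : Fin s → ℝ) : Fin s → ℝ :=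
  fun i => fderiv ℝ W A (Pi.single i 1)

lemma fderiv_eq_dot (W : (Fin s → ℝ) → ℝ) (A v : Fin s → ℝ) :
    fderiv ℝ W A v = v ⬝ᵥ gradW W A := by
  conv_lhs => rw [← Finset.univ_sum_single v]
  rw [map_sum]
  simp only [dotProduct, gradW]
  congr 1; ext i
  have h1 : (Pi.single i (v i) : Fin s → ℝ) = v i • (Pi.single i (1:ℝ) : Fin s → ℝ) := by
    ext j; by_cases h : j = i <;> simp [Pi.single_apply, h]
  rw [h1, (fderiv ℝ W A).map_smul]; simp [mul_comm]

lemma grad_ineq {W : (Fin s → ℝ) → ℝ} (hconv : ConvexOn ℝ Set.univ W)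
    (hdiff : Differentiable ℝ W) (A B : Fin s → ℝ) :
    W B + (A - B) ⬝ᵥ gradW W B ≤ W A := by
  rcases eq_or_ne A B with rfl | hne
  · simp
  set ψ : ℝ → ℝ := fun t => W (B + t • (A - B)) with hψ
  have hcurve : ∀ t : ℝ, HasDerivAt (fun t : ℝ => B + t • (A - B)) (A - B) t := by
    intro t
    simpa using ((hasDerivAt_id t).smul_const (A - B)).const_add B
  have hψconv : ConvexOn ℝ Set.univ ψ := by
    have := hconv.comp_affineMap (AffineMap.lineMap B A)
    have heq : ∀ t : ℝ, (W ∘ (AffineMap.lineMap B A)) t = ψ t := by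
      intro t; simp only [ψ, Function.comp, AffineMap.lineMap_apply]
      congr 1
      ext i; simp; ring
    rw [show (AffineMap.lineMap B A : ℝ →ᵃ[ℝ] _) ⁻¹' Set.univ = Set.univ from rfl] at this
    exact this.congr (fun x _ => heq x)
  have hψd : HasDerivAt ψ (fderiv ℝ W B (A - B)) 0 := by
    have hd : HasFDerivAt W (fderiv ℝ W B) (B + (0:ℝ) • (A - B)) := by
      simpa using (hdiff B).hasFDerivAt
    exact hd.comp_hasDerivAt 0 (hcurve 0)
  have hle := hψconv.le_slope_of_hasDerivAt (Set.mem_univ (0:ℝ)) (Set.mem_univ (1:ℝ)) one_pos hψd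
  have hslope : slope ψ 0 1 = W A - W B := by
    rw [slope_def_field]; simp [ψ]
  rw [hslope, fderiv_eq_dot] at hle
  linarith

lemma fenchel_eq_of_grad {W : (Fin s → ℝ) → ℝ} (hconv : ConvexOn ℝ Set.univ W)
    (hdiff : Differentiable ℝ W) {y B : Fin s → ℝ} (hgB : gradW W B = y) :
    fenchelConj W y = ((y ⬝ᵥ B - W B : ℝ) : EReal) := by
  apply le_antisymm
  · apply iSup_le
    intro A
    have h := grad_ineq hconv hdiff A B
    rw [hgB] at h
    rw [EReal.coe_le_coe_iff]
    have : (A - B) ⬝ᵥ y = A ⬝ᵥ y - B ⬝ᵥ y := by simp [sub_dotProduct]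
    rw [this] at h
    have h1 : A ⬝ᵥ y = y ⬝ᵥ A := dotProduct_comm A y
    have h2 : B ⬝ᵥ y = y ⬝ᵥ B := dotProduct_comm B y
    linarith
  · exact le_iSup (fun A => ((y ⬝ᵥ A - W A : ℝ) : EReal)) B

lemma abs_dot_le (z w : Fin s → ℝ) : |z ⬝ᵥ w| ≤ (s : ℝ) * ‖z‖ * ‖w‖ := by
  calc |z ⬝ᵥ w| ≤ ∑ i, |z i * w i| := Finset.abs_sum_le_sum_abs _ _
    _ ≤ ∑ _i : Fin s, ‖z‖ * ‖w‖ := by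
        apply Finset.sum_le_sum
        intro i _
        rw [abs_mul]
        have h1 : |z i| ≤ ‖z‖ := by
          simpa [Real.norm_eq_abs] using norm_le_pi_norm z i
        have h2 : |w i| ≤ ‖w‖ := by
          simpa [Real.norm_eq_abs] using norm_le_pi_norm w i
        exact mul_le_mul h1 h2 (abs_nonneg _) (norm_nonneg _)
    _ = (s : ℝ) * ‖z‖ * ‖w‖ := by simp [mul_assoc]

lemma expansion {W : (Fin s → ℝ) → ℝ} (hWconv : StrictConvexOn ℝ Set.univ W)
    (hWsmooth : ContDiff ℝ 2 W) (Ahat : Fin s → ℝ)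
    (hHpd : (hessianMatrix W Ahat).PosDef) {ε : ℝ} (hε : 0 < ε) :
    ∃ r > 0, ∀ l : ℝ, 0 < l → l < r → ∀ z : Fin s → ℝ, ‖z‖ ≤ 1 →
      ∃ v : ℝ, fenchelConj W (gradW W Ahat - l • z) = (v : EReal) ∧
        |v - (gradW W Ahat ⬝ᵥ Ahat - W Ahat) + l * (z ⬝ᵥ Ahat)
          - l ^ 2 / 2 * (z ⬝ᵥ ((hessianMatrix W Ahat)⁻¹ *ᵥ z))| ≤ ε * l ^ 2 := by
  have hdiff : Differentiable ℝ W := hWsmooth.differentiable (by norm_num)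
  set H := hessianMatrix W Ahat with hHdef
  set Shat' := gradW W Ahat with hSdef
  -- gradient is C¹
  have hFc : ContDiff ℝ 1 (gradW W) := by
    apply contDiff_pi.2
    intro i
    exact (hWsmooth.fderiv_right (by norm_num)).clm_apply contDiff_const
  -- symmetry of H
  have hsymm : ∀ i j, H j i = H i j := by
    intro i j
    have := congrFun (congrFun hHpd.1 i) j
    simpa [Matrix.conjTranspose_apply] using this
  -- derivative of gradient is H *ᵥ ·
  have hfd : ∀ v, fderiv ℝ (gradW W) Ahat v = H *ᵥ v := by
    intro v
    have hdFi : ∀ (j : Fin s), Differentiable ℝ (fun A => fderiv ℝ W A (Pi.single j 1)) :=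
      fun j => ((hWsmooth.fderiv_right (m := 1) (by norm_num)).clm_apply contDiff_const).differentiable
        (by norm_num)
    have h1 : gradW W = fun A j => fderiv ℝ W A (Pi.single j 1) := rfl
    rw [h1, fderiv_pi (fun j => (hdFi j).differentiableAt)]
    ext j
    have h2 : fderiv ℝ (fun A => fderiv ℝ W A (Pi.single j 1)) Ahat v
        = v ⬝ᵥ gradW (fun A => fderiv ℝ W A (Pi.single j 1)) Ahat :=
      fderiv_eq_dot _ _ _
    have h3 : gradW (fun A => fderiv ℝ W A (Pi.single j 1)) Ahat = fun i => H i j := rfl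
    simp only [ContinuousLinearMap.pi_apply, h2, h3]
    simp only [Matrix.mulVec, dotProduct]
    exact Finset.sum_congr rfl fun i _ => by rw [hsymm i j]; ring
  -- invertibility
  have hdet : IsUnit H.det := isUnit_iff_ne_zero.2 hHpd.det_pos.ne'
  set eL : (Fin s → ℝ) ≃L[ℝ] (Fin s → ℝ) :=
    (H.toLinearEquiv' (H.invertibleOfIsUnitDet hdet)).toContinuousLinearEquiv with heLdef
  have heL : ∀ v, eL v = H *ᵥ v := by
    intro v
    have := Matrix.toLinearEquiv'_apply H (H.invertibleOfIsUnitDet hdet)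
    have h2 : (H.toLinearEquiv' (H.invertibleOfIsUnitDet hdet)) v = Matrix.toLin' H v := by
      rw [← this]; rfl
    rw [show eL v = (H.toLinearEquiv' (H.invertibleOfIsUnitDet hdet)) v from rfl]
    simpa [Matrix.toLin'_apply] using h2
  have heLs : ∀ v, eL.symm v = H⁻¹ *ᵥ v := by
    intro v
    apply eL.injective
    rw [eL.apply_symm_apply, heL, Matrix.mulVec_mulVec, Matrix.mul_nonsing_inv _ hdet,
      Matrix.one_mulVec]
  -- strict derivative
  have hFs : HasStrictFDerivAt (gradW W) (eL : (Fin s → ℝ) →L[ℝ] (Fin s → ℝ)) Ahat := by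
    have h1 := (hFc.contDiffAt (x := Ahat)).hasStrictFDerivAt one_ne_zero
    have h2 : (eL : (Fin s → ℝ) →L[ℝ] (Fin s → ℝ)) = fderiv ℝ (gradW W) Ahat :=
      ContinuousLinearMap.ext fun v => by rw [ContinuousLinearEquiv.coe_coe, heL, hfd]
    rw [h2]; exact h1
  set g := hFs.localInverse (gradW W) eL Ahat with hgdef
  have hg0 : g Shat' = Ahat := hFs.localInverse_apply_image
  have hgs : HasStrictFDerivAt g (eL.symm : (Fin s → ℝ) →L[ℝ] (Fin s → ℝ)) Shat' :=
    hFs.to_localInverse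
  have hright : ∀ᶠ y in nhds Shat', gradW W (g y) = y := hFs.eventually_right_inverse
  have hgC : ContDiffAt ℝ 1 g Shat' := (hFc.contDiffAt (x := Ahat)).to_localInverse hFs.hasFDerivAt one_ne_zero
  obtain ⟨u, hu, hgu⟩ := hgC.contDiffOn le_rfl (by simp)
  set U := interior u with hUdef
  have hUopen : IsOpen U := isOpen_interior
  have hSU : Shat' ∈ U := mem_interior_iff_mem_nhds.2 hu
  have hgU : ContDiffOn ℝ 1 g U := hgu.mono interior_subset
  have hdg : ∀ y ∈ U, DifferentiableAt ℝ g y := fun y hy =>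
    ((hgU.differentiableOn one_ne_zero).differentiableAt (hUopen.mem_nhds hy))
  have hcont : ContinuousOn (fderiv ℝ g) U := hgU.continuousOn_fderiv_of_isOpen hUopen le_rfl
  have hfg0 : fderiv ℝ g Shat' = (eL.symm : (Fin s → ℝ) →L[ℝ] (Fin s → ℝ)) :=
    hgs.hasFDerivAt.fderiv
  set ε' := ε / (s + 1) with hε'def
  have hε' : 0 < ε' := by positivity
  have hcontAt : ContinuousAt (fderiv ℝ g) Shat' := hcont.continuousAt (hUopen.mem_nhds hSU)
  obtain ⟨r2, hr2, hr2p⟩ := Metric.continuousAt_iff.1 hcontAt ε' hε'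
  obtain ⟨r1, hr1, hr1p⟩ := Metric.eventually_nhds_iff.1 hright
  obtain ⟨r3, hr3, hr3p⟩ := Metric.mem_nhds_iff.1 (hUopen.mem_nhds hSU)
  set r := min r1 (min r2 r3) with hrdef
  have hr : 0 < r := lt_min hr1 (lt_min hr2 hr3)
  have hmemU : ∀ y, dist y Shat' < r → y ∈ U := by
    intro y hy
    apply hr3p
    exact Metric.mem_ball.2 (lt_of_lt_of_le hy (le_trans (min_le_right _ _) (min_le_right _ _)))
  have hrInv : ∀ y, dist y Shat' < r → gradW W (g y) = y := by
    intro y hy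
    exact hr1p (lt_of_lt_of_le hy (min_le_left _ _))
  have hnormd : ∀ y, dist y Shat' < r →
      ‖fderiv ℝ g y - (eL.symm : (Fin s → ℝ) →L[ℝ] (Fin s → ℝ))‖ ≤ ε' := by
    intro y hy
    have := hr2p (lt_of_lt_of_le hy (le_trans (min_le_right _ _) (min_le_left _ _)))
    rw [dist_eq_norm, hfg0] at this
    exact le_of_lt this
  -- uniform linearization of g on the ball
  have hE : ∀ y, dist y Shat' < r →
      ‖g y - Ahat - eL.symm (y - Shat')‖ ≤ ε' * ‖y - Shat'‖ := by
    intro y hy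
    set uf : (Fin s → ℝ) → (Fin s → ℝ) := fun w => g w - eL.symm w with hufdef
    have hufd : ∀ w ∈ Metric.ball Shat' r, HasFDerivWithinAt uf
        (fderiv ℝ g w - (eL.symm : (Fin s → ℝ) →L[ℝ] (Fin s → ℝ))) (Metric.ball Shat' r) w := by
      intro w hw
      have h1 : HasFDerivAt g (fderiv ℝ g w) w :=
        (hdg w (hmemU w (Metric.mem_ball.1 hw))).hasFDerivAt
      have h2 : HasFDerivAt (fun w => eL.symm w)
          ((eL.symm : (Fin s → ℝ) →L[ℝ] (Fin s → ℝ))) w :=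
        (eL.symm : (Fin s → ℝ) →L[ℝ] (Fin s → ℝ)).hasFDerivAt
      exact (h1.sub h2).hasFDerivWithinAt
    have hb : ∀ w ∈ Metric.ball Shat' r,
        ‖fderiv ℝ g w - (eL.symm : (Fin s → ℝ) →L[ℝ] (Fin s → ℝ))‖ ≤ ε' := fun w hw =>
      hnormd w (Metric.mem_ball.1 hw)
    have := (convex_ball Shat' r).norm_image_sub_le_of_norm_hasFDerivWithin_le hufd hb
      (Metric.mem_ball_self hr) (Metric.mem_ball.2 hy)
    have huf : uf y - uf Shat' = g y - Ahat - eL.symm (y - Shat') := by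
      simp only [uf, hg0, map_sub]
      abel
    rw [huf] at this
    exact this
  refine ⟨r, hr, ?_⟩
  intro l hl hlr z hz1
  set q := z ⬝ᵥ (H⁻¹ *ᵥ z) with hqdef
  set p : ℝ → (Fin s → ℝ) := fun t => Shat' - t • z with hpdef
  have hpball : ∀ t, t ∈ Set.Icc 0 l → dist (p t) Shat' < r := by
    intro t ht
    have : dist (p t) Shat' = |t| * ‖z‖ := by
      rw [dist_eq_norm]
      simp only [p, sub_sub_cancel_left, norm_neg, norm_smul, Real.norm_eq_abs]
    rw [this]
    calc |t| * ‖z‖ ≤ |t| * 1 := by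
          apply mul_le_mul_of_nonneg_left hz1 (abs_nonneg t)
      _ = |t| := mul_one _
      _ ≤ l := by rw [abs_of_nonneg ht.1]; exact ht.2
      _ < r := hlr
  set G := fun t => g (p t) with hGdef
  have hpd : ∀ t : ℝ, HasDerivAt p (-z) t := by
    intro t
    have := ((hasDerivAt_id t).smul_const z).const_sub Shat'
    simpa [p] using this
  have hGd : ∀ t ∈ Set.Icc 0 l, HasDerivAt G (fderiv ℝ g (p t) (-z)) t := by
    intro t ht
    exact ((hdg _ (hmemU _ (hpball t ht))).hasFDerivAt.comp_hasDerivAt t (hpd t))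
  set φ : ℝ → ℝ := fun t => p t ⬝ᵥ G t - W (G t) with hφdef
  have hφd : ∀ t ∈ Set.Icc 0 l, HasDerivAt φ (-(z ⬝ᵥ G t)) t := by
    intro t ht
    set d := fderiv ℝ g (p t) (-z) with hddef
    have h1 : HasDerivAt (fun t => p t ⬝ᵥ G t)
        (∑ i, ((-z i) * G t i + p t i * d i)) t := by
      apply HasDerivAt.fun_sum
      intro i _
      exact ((hasDerivAt_pi.1 (hpd t)) i).mul ((hasDerivAt_pi.1 (hGd t ht)) i)
    have h2 : HasDerivAt (fun t => W (G t)) (fderiv ℝ W (G t) d) t :=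
      (hdiff _).hasFDerivAt.comp_hasDerivAt t (hGd t ht)
    have h3 := h1.sub h2
    refine h3.congr_deriv ?_
    rw [fderiv_eq_dot, hrInv _ (hpball t ht)]
    rw [Finset.sum_add_distrib]
    have e1 : ∑ i, (-z i) * G t i = -(z ⬝ᵥ G t) := by
      simp [dotProduct]
    have e2 : ∑ i, p t i * d i = d ⬝ᵥ p t := by
      simp only [dotProduct]
      exact Finset.sum_congr rfl fun i _ => mul_comm _ _
    rw [e1, e2]
    ring
  set χ : ℝ → ℝ := fun t => φ t - φ 0 + t * (z ⬝ᵥ Ahat) - t ^ 2 / 2 * q with hχdef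
  have hχd : ∀ t ∈ Set.Icc 0 l, HasDerivAt χ (-(z ⬝ᵥ G t) + z ⬝ᵥ Ahat - t * q) t := by
    intro t ht
    have h1 : HasDerivAt (fun t : ℝ => t * (z ⬝ᵥ Ahat)) (z ⬝ᵥ Ahat) t :=
      hasDerivAt_mul_const _
    have h2 : HasDerivAt (fun t : ℝ => t ^ 2 / 2 * q) (t * q) t := by
      have := ((hasDerivAt_pow 2 t).div_const 2).mul_const q
      refine this.congr_deriv ?_
      ring
    exact (((hφd t ht).sub_const (φ 0)).add h1).sub h2
  have hbound : ∀ t ∈ Set.Icc 0 l,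
      |(-(z ⬝ᵥ G t) + z ⬝ᵥ Ahat - t * q)| ≤ (s : ℝ) * ε' * l := by
    intro t ht
    have hkey : -(z ⬝ᵥ G t) + z ⬝ᵥ Ahat - t * q
        = -(z ⬝ᵥ (G t - Ahat - eL.symm (p t - Shat'))) := by
      have h1 : p t - Shat' = -(t • z) := by simp [p]
      rw [h1, map_neg, _root_.map_smul, heLs]
      rw [sub_neg_eq_add, dotProduct_add, dotProduct_sub, dotProduct_smul]
      simp only [smul_eq_mul]
      rw [hqdef]
      ring
    rw [hkey, abs_neg]
    apply (abs_dot_le _ _).trans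
    have hw : ‖G t - Ahat - eL.symm (p t - Shat')‖ ≤ ε' * l := by
      apply (hE _ (hpball t ht)).trans
      have : ‖p t - Shat'‖ ≤ l := by
        simp only [p, sub_sub_cancel_left, norm_neg, norm_smul, Real.norm_eq_abs]
        calc |t| * ‖z‖ ≤ |t| * 1 := mul_le_mul_of_nonneg_left hz1 (abs_nonneg t)
          _ = |t| := mul_one _
          _ ≤ l := by rw [abs_of_nonneg ht.1]; exact ht.2
      exact mul_le_mul_of_nonneg_left this (le_of_lt hε')
    calc (s : ℝ) * ‖z‖ * ‖G t - Ahat - eL.symm (p t - Shat')‖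
        ≤ (s : ℝ) * 1 * (ε' * l) := by
          apply mul_le_mul
          · exact mul_le_mul_of_nonneg_left hz1 (Nat.cast_nonneg s)
          · exact hw
          · exact norm_nonneg _
          · positivity
      _ = (s : ℝ) * ε' * l := by ring
  have hMVT := Convex.norm_image_sub_le_of_norm_hasDerivWithin_le
    (f := χ) (f' := fun t => -(z ⬝ᵥ G t) + z ⬝ᵥ Ahat - t * q)
    (fun t ht => (hχd t ht).hasDerivWithinAt)
    (fun t ht => by simpa [Real.norm_eq_abs] using hbound t ht)
    (convex_Icc 0 l) (Set.left_mem_Icc.2 (le_of_lt hl)) (Set.right_mem_Icc.2 (le_of_lt hl))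
  have hχ0 : χ 0 = 0 := by simp [χ]
  rw [hχ0, sub_zero, Real.norm_eq_abs] at hMVT
  have hχl : |χ l| ≤ ε * l ^ 2 := by
    apply hMVT.trans
    have h1 : ‖l - 0‖ = l := by rw [sub_zero, Real.norm_eq_abs, abs_of_pos hl]
    rw [h1]
    have h2 : (s : ℝ) * ε' ≤ ε := by
      rw [hε'def]
      have hpos : (0:ℝ) < (s:ℝ) + 1 := by positivity
      calc (s : ℝ) * (ε / ((s:ℝ) + 1)) = ((s:ℝ) / ((s:ℝ) + 1)) * ε := by ring
        _ ≤ 1 * ε := mul_le_mul_of_nonneg_right ((div_le_one hpos).2 (by linarith)) hε.le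
        _ = ε := one_mul ε
    nlinarith [sq_nonneg l, hl.le]
  refine ⟨φ l, ?_, ?_⟩
  · have hmem : dist (p l) Shat' < r := hpball l ⟨le_of_lt hl, le_refl l⟩
    have := fenchel_eq_of_grad hWconv.convexOn hdiff (hrInv _ hmem)
    exact this
  · have hφ0 : φ 0 = Shat' ⬝ᵥ Ahat - W Ahat := by
      have hp0 : p 0 = Shat' := by simp [p]
      simp only [φ, G, hp0, hg0]
    have : φ l - (Shat' ⬝ᵥ Ahat - W Ahat) + l * (z ⬝ᵥ Ahat) - l ^ 2 / 2 * q = χ l := by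
      rw [hχdef]; rw [hφ0]
    rw [← hSdef, ← hqdef, ← hHdef] at *
    rw [this]
    exact hχl


set_option maxHeartbeats 1000000 in
/-- with `W` strictly convex, C², `∇²W(Â) ≻ 0`, `Σ̂ = ∇W(Â)`, and
`z^λ` a minimizer of `z ↦ W*(Σ̂ − λ z)` over `{‖z‖_∞ ≤ 1}`, as `λ → 0⁺` the
selection `z^λ` converges to the minimizer of `⟨z, (∇²W(Â))⁻¹ z⟩` over `∂‖Â‖₁`. -/
theorem minimal_norm_certificate_limit {s : ℕ}
    (W : (Fin s → ℝ) → ℝ)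
    (hWconv : StrictConvexOn ℝ Set.univ W)
    (hWsmooth : ContDiff ℝ 2 W)
    (Ahat : Fin s → ℝ)
    (hHpd : (hessianMatrix W Ahat).PosDef)
    (Shat : Fin s → ℝ)
    (hShat : ∀ i, Shat i = fderiv ℝ W Ahat (Pi.single i 1))
    (zsel : ℝ → (Fin s → ℝ))
    (hfeas : ∀ l : ℝ, 0 < l → ∀ i, |zsel l i| ≤ 1)
    (hopt : ∀ l : ℝ, 0 < l → ∀ z : Fin s → ℝ, (∀ i, |z i| ≤ 1) →
      fenchelConj W (Shat - l • zsel l) ≤ fenchelConj W (Shat - l • z))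
    (zmin : Fin s → ℝ)
    (hzmin : zmin ∈ l1Subdiff Ahat)
    (hzminopt : ∀ z ∈ l1Subdiff Ahat,
      zmin ⬝ᵥ ((hessianMatrix W Ahat)⁻¹ *ᵥ zmin) ≤ z ⬝ᵥ ((hessianMatrix W Ahat)⁻¹ *ᵥ z)) :
    Tendsto zsel (nhdsWithin 0 (Set.Ioi 0)) (nhds zmin) := by
  have hSg : Shat = gradW W Ahat := funext fun i => hShat i
  set B : Matrix (Fin s) (Fin s) ℝ := (hessianMatrix W Ahat)⁻¹ with hB
  set q : (Fin s → ℝ) → ℝ := fun z => z ⬝ᵥ (B *ᵥ z) with hq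
  -- positive definiteness and symmetry of B
  have hBpd : B.PosDef := hHpd.inv
  have hij : ∀ i j, B j i = B i j := by
    intro i j
    have := congrFun (congrFun hBpd.1 i) j
    simpa [Matrix.conjTranspose_apply] using this
  have hsymB : ∀ u v : Fin s → ℝ, u ⬝ᵥ (B *ᵥ v) = v ⬝ᵥ (B *ᵥ u) := by
    intro u v
    simp only [dotProduct, Matrix.mulVec, Finset.mul_sum]
    rw [Finset.sum_comm]
    apply Finset.sum_congr rfl; intro j _
    apply Finset.sum_congr rfl; intro i _
    rw [hij i j]; ring
  have hqpos : ∀ c : Fin s → ℝ, c ≠ 0 → 0 < q c := by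
    intro c hc
    have := hBpd.dotProduct_mulVec_pos hc
    simpa [hq] using this
  -- strict minimality of zmin
  have hstrict : ∀ z ∈ l1Subdiff Ahat, z ≠ zmin → q zmin < q z := by
    intro z hz hne
    set c : Fin s → ℝ := z - zmin with hc
    have hc0 : c ≠ 0 := sub_ne_zero.2 hne
    have hqc : 0 < q c := hqpos c hc0
    set m : Fin s → ℝ := zmin + (1/2 : ℝ) • c with hm
    have hmmem : m ∈ l1Subdiff Ahat := by
      constructor
      · intro i
        have h1 := abs_le.1 (hzmin.1 i)
        have h2 := abs_le.1 (hz.1 i)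
        have hmi : m i = (zmin i + z i) / 2 := by
          simp only [hm, hc, Pi.add_apply, Pi.smul_apply, Pi.sub_apply, smul_eq_mul]
          ring
        rw [hmi, abs_le]
        constructor <;> [linarith [h1.1, h2.1]; linarith [h1.2, h2.2]]
      · intro i hi
        have hmi : m i = (zmin i + z i) / 2 := by
          simp only [hm, hc, Pi.add_apply, Pi.smul_apply, Pi.sub_apply, smul_eq_mul]
          ring
        rw [hmi, hzmin.2 i hi, hz.2 i hi]
        ring
    have hqm := hzminopt m hmmem
    have hz' : z = zmin + c := by simp [hc]
    have hexp : q z = q zmin + 2 * (zmin ⬝ᵥ (B *ᵥ c)) + q c := by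
      rw [hq]
      simp only [hz', Matrix.mulVec_add, dotProduct_add, add_dotProduct]
      rw [hsymB c zmin]
      ring
    have hexpm : q m = q zmin + (zmin ⬝ᵥ (B *ᵥ c)) + q c / 4 := by
      rw [hq]
      simp only [hm, Matrix.mulVec_add, Matrix.mulVec_smul, dotProduct_add, add_dotProduct,
        dotProduct_smul, smul_dotProduct, smul_eq_mul]
      rw [hsymB c zmin]
      ring
    have hqmge : q zmin ≤ q m := hqm
    linarith [hexp, hexpm, hqmge, hqc]
  -- sign facts
  have hsign : ∀ x : ℝ, x ≠ 0 → Real.sign x * x = |x| := by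
    intro x hx
    rcases lt_or_gt_of_ne hx with h | h
    · rw [Real.sign_of_neg h, abs_of_neg h]; ring
    · rw [Real.sign_of_pos h, abs_of_pos h]; ring
  have hzA : zmin ⬝ᵥ Ahat = ∑ i, |Ahat i| := by
    simp only [dotProduct]
    apply Finset.sum_congr rfl
    intro i _
    by_cases hi : Ahat i = 0
    · simp [hi]
    · rw [hzmin.2 i hi, hsign _ hi]
  have hterm : ∀ z : Fin s → ℝ, (∀ i, |z i| ≤ 1) → ∀ j, z j * Ahat j ≤ |Ahat j| := by
    intro z hzf j
    calc z j * Ahat j ≤ |z j * Ahat j| := le_abs_self _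
      _ = |z j| * |Ahat j| := abs_mul _ _
      _ ≤ 1 * |Ahat j| := mul_le_mul_of_nonneg_right (hzf j) (abs_nonneg _)
      _ = |Ahat j| := one_mul _
  have hDub : ∀ z : Fin s → ℝ, (∀ i, |z i| ≤ 1) → z ⬝ᵥ Ahat ≤ ∑ i, |Ahat i| := by
    intro z hzf
    simp only [dotProduct]
    exact Finset.sum_le_sum fun i _ => hterm z hzf i
  have hsubd : ∀ z : Fin s → ℝ, (∀ i, |z i| ≤ 1) → z ⬝ᵥ Ahat = ∑ i, |Ahat i| →
      z ∈ l1Subdiff Ahat := by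
    intro z hzf heq
    refine ⟨hzf, ?_⟩
    intro i hi
    by_contra hne
    have hlt : z i * Ahat i < |Ahat i| := by
      rcases (hterm z hzf i).lt_or_eq with h | h
      · exact h
      · exfalso
        apply hne
        rcases lt_or_gt_of_ne hi with hn | hp
        · rw [abs_of_neg hn] at h
          rw [Real.sign_of_neg hn]
          exact mul_right_cancel₀ hi (by linarith)
        · rw [abs_of_pos hp] at h
          rw [Real.sign_of_pos hp]
          exact mul_right_cancel₀ hi (by linarith)
    have hslt : ∑ j, z j * Ahat j < ∑ j, |Ahat j| :=
      Finset.sum_lt_sum (fun j _ => hterm z hzf j) ⟨i, Finset.mem_univ i, hlt⟩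
    simp only [dotProduct] at heq
    linarith
  -- continuity
  have hcD : Continuous fun z : Fin s → ℝ => z ⬝ᵥ Ahat := by
    exact continuous_finset_sum _ fun i _ => (continuous_apply i).mul continuous_const
  have hcq : Continuous q := by
    rw [hq]
    have : (fun z : Fin s → ℝ => z ⬝ᵥ (B *ᵥ z))
        = fun z => ∑ i, z i * ∑ j, B i j * z j := rfl
    rw [this]
    exact continuous_finset_sum _ fun i _ => (continuous_apply i).mul
      (continuous_finset_sum _ fun j _ => continuous_const.mul (continuous_apply j))
  have hnorm1 : ∀ z : Fin s → ℝ, (∀ i, |z i| ≤ 1) → ‖z‖ ≤ 1 := by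
    intro z h
    exact (pi_norm_le_iff_of_nonneg zero_le_one).2 fun i => by
      simpa [Real.norm_eq_abs] using h i
  -- main argument
  apply Metric.tendsto_nhds.2
  intro δ hδ
  set K : Set (Fin s → ℝ) := {z | (∀ i, |z i| ≤ 1) ∧ δ ≤ dist z zmin} with hK
  by_cases hKne : K.Nonempty
  · -- K nonempty
    have hKcomp : IsCompact K := by
      have hclosed : IsClosed K := by
        have h1 : IsClosed {z : Fin s → ℝ | ∀ i, |z i| ≤ 1} := by
          have he : {z : Fin s → ℝ | ∀ i, |z i| ≤ 1} = ⋂ i, {z | |z i| ≤ 1} := by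
            ext; simp
          rw [he]
          exact isClosed_iInter fun i =>
            isClosed_le ((continuous_apply i).abs) continuous_const
        have h2 : IsClosed {z : Fin s → ℝ | δ ≤ dist z zmin} :=
          isClosed_le continuous_const (continuous_id.dist continuous_const)
        exact h1.inter h2
      apply (isCompact_closedBall (0 : Fin s → ℝ) 1).of_isClosed_subset hclosed
      intro z hz
      rw [Metric.mem_closedBall, dist_zero_right]
      exact hnorm1 z hz.1
    set ρ : (Fin s → ℝ) → ℝ :=
      fun z => max ((∑ i, |Ahat i|) - z ⬝ᵥ Ahat) (q z - q zmin) with hρ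
    have hρcont : Continuous ρ := (continuous_const.sub hcD).max (hcq.sub continuous_const)
    obtain ⟨z0, hz0K, hz0min⟩ := hKcomp.exists_isMinOn hKne hρcont.continuousOn
    have hγ : 0 < ρ z0 := by
      rcases (sub_nonneg.2 (hDub z0 hz0K.1)).eq_or_lt with h | h
      · -- first component zero: z0 in subdifferential
        have hz0sub : z0 ∈ l1Subdiff Ahat := hsubd z0 hz0K.1 (by linarith)
        have hz0ne : z0 ≠ zmin := by
          intro he
          rw [he] at hz0K
          have h2 := hz0K.2
          rw [dist_self] at h2
          linarith
        have := hstrict z0 hz0sub hz0ne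
        calc (0:ℝ) < q z0 - q zmin := by linarith
          _ ≤ ρ z0 := le_max_right _ _
      · calc (0:ℝ) < (∑ i, |Ahat i|) - z0 ⬝ᵥ Ahat := h
          _ ≤ ρ z0 := le_max_left _ _
    set γ := ρ z0 with hγdef
    -- lower bound for q z - q zmin on the unit ball
    obtain ⟨zb, _, hzbmin⟩ := (isCompact_closedBall (0 : Fin s → ℝ) 1).exists_isMinOn
      ⟨0, by simp⟩ (hcq.sub continuous_const).continuousOn
    set m0 := q zb - q zmin with hm0
    have hm0le : ∀ z : Fin s → ℝ, ‖z‖ ≤ 1 → m0 ≤ q z - q zmin := by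
      intro z hz
      exact hzbmin (by rwa [Metric.mem_closedBall, dist_zero_right])
    -- expansion
    have hε₀ : (0:ℝ) < γ / 16 := by positivity
    obtain ⟨r, hr, hexp⟩ := expansion hWconv hWsmooth Ahat hHpd hε₀
    set lam1 := γ / (2 * (γ/16) + |m0|/2 + 1) with hlam1
    have hlam1pos : 0 < lam1 := div_pos hγ (by positivity)
    filter_upwards [Ioo_mem_nhdsGT_of_mem
      (show (0:ℝ) ∈ Set.Ico 0 (min r lam1) from ⟨le_refl 0, lt_min hr hlam1pos⟩)] with l hl
    obtain ⟨hl0, hlm⟩ := hl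
    have hlr : l < r := hlm.trans_le (min_le_left _ _)
    have hllam : l < lam1 := hlm.trans_le (min_le_right _ _)
    have haf : ∀ i, |zsel l i| ≤ 1 := hfeas l hl0
    obtain ⟨va, hva, hesta⟩ := hexp l hl0 hlr (zsel l) (hnorm1 _ haf)
    obtain ⟨vm, hvm, hestm⟩ := hexp l hl0 hlr zmin (hnorm1 _ hzmin.1)
    rw [← hB] at hesta hestm
    have hle : va ≤ vm := by
      have h := hopt l hl0 zmin hzmin.1
      rw [hSg, hva, hvm] at h
      exact_mod_cast h
    have habs1 := abs_le.1 hesta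
    have habs2 := abs_le.1 hestm
    by_contra hcon
    have haK : zsel l ∈ K := ⟨haf, not_lt.1 hcon⟩
    have hρa : γ ≤ ρ (zsel l) := hz0min haK
    have hkey : l * ((∑ i, |Ahat i|) - zsel l ⬝ᵥ Ahat)
        + l^2/2 * (q (zsel l) - q zmin) ≤ 2 * (γ/16) * l^2 := by
      have hqa : q (zsel l) = zsel l ⬝ᵥ (B *ᵥ zsel l) := rfl
      have hqm : q zmin = zmin ⬝ᵥ (B *ᵥ zmin) := rfl
      rw [hqa, hqm]
      nlinarith [habs1.1, habs1.2, habs2.1, habs2.2, hle, hzA, sq_nonneg l]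
    have hψlb : m0 ≤ q (zsel l) - q zmin := hm0le _ (hnorm1 _ haf)
    have hDa : (0:ℝ) ≤ (∑ i, |Ahat i|) - zsel l ⬝ᵥ Ahat := sub_nonneg.2 (hDub _ haf)
    have hlam1' : l * (2 * (γ/16) + |m0|/2 + 1) < γ := by
      rw [hlam1] at hllam
      exact (lt_div_iff₀ (by positivity)).1 hllam
    have hρa' : γ ≤ max ((∑ i, |Ahat i|) - zsel l ⬝ᵥ Ahat) (q (zsel l) - q zmin) := hρa
    rcases le_max_iff.1 hρa' with hD | hψ
    · -- first component large
      have h2 : l * γ ≤ l * ((∑ i, |Ahat i|) - zsel l ⬝ᵥ Ahat) :=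
        mul_le_mul_of_nonneg_left hD hl0.le
      have h3 : l^2/2 * m0 ≤ l^2/2 * (q (zsel l) - q zmin) :=
        mul_le_mul_of_nonneg_left hψlb (by positivity)
      nlinarith [hkey, h2, h3, hl0, le_abs_self m0, neg_abs_le m0, sq_nonneg l,
        mul_lt_mul_of_pos_left hlam1' hl0]
    · -- second component large
      have h2 : l^2/2 * γ ≤ l^2/2 * (q (zsel l) - q zmin) :=
        mul_le_mul_of_nonneg_left hψ (by positivity)
      have h3 : 0 ≤ l * ((∑ i, |Ahat i|) - zsel l ⬝ᵥ Ahat) := mul_nonneg hl0.le hDa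
      have h4 : 0 < γ * l^2 := by positivity
      nlinarith [hkey, h2, h3, h4]
  · -- K empty
    filter_upwards [self_mem_nhdsWithin] with l hl
    have haf := hfeas l hl
    by_contra hcon
    exact hKne ⟨zsel l, haf, not_lt.1 hcon⟩
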